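/- Let (Z_j)_{j≥1} be i.i.d. real random variables with mean 0 and variance 1, and for each n let N^{(n)} be an ℕ-valued random variable such that P(|N^{(n)} - E[N^{(n)}]| ≥ x_n) → 0 as n → ∞, where x_n ≥ 0 satisfies x_n/n → 0. Then (1/√n) · Σ_{j ∈ [min(N^{(n)}, E[N^{(n)}]), max(N^{(n)}, E[N^{(n)}])]} Z_j converges to 0 in probability. -/

import Mathlib

open MeasureTheory ProbabilityTheory Filter

open scoped ENNReal NNReal Topology
open Finset in
lemma kolmogorov_aux {Ω : Type*} [MeasurableSpace Ω] (μ : Measure Ω) [IsProbabilityMeasure μ]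
    (Z : ℕ → Ω → ℝ) (hmeas : ∀ j, Measurable (Z j))
    (hindep : iIndepFun Z μ)
    (hL2 : ∀ j, MemLp (Z j) 2 μ)
    (hmean : ∀ j, ∫ ω, Z j ω ∂μ = 0)
    (hvar : ∀ j, ∫ ω, (Z j ω) ^ 2 ∂μ = 1)
    (a K : ℕ) {c : ℝ} (hc : 0 < c) :
    μ {ω | ∃ k, k ≤ K ∧ c ≤ |∑ j ∈ Finset.Icc a (a + k), Z j ω|}
      ≤ ENNReal.ofReal ((K + 1) / c ^ 2) := by
  classical
  have hsm : ∀ j, StronglyMeasurable (Z j) := fun j => (hmeas j).stronglyMeasurable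
  set F := Filtration.natural Z hsm with hF
  let G : Filtration ℕ _ := ⟨fun k => F (a + k), fun i j hij => F.mono (by omega), fun k => F.le _⟩
  set T : ℕ → Ω → ℝ := fun k ω => ∑ j ∈ Finset.Icc a (a + k), Z j ω with hT
  have hTeq : ∀ k, T k = ∑ j ∈ Finset.Icc a (a + k), Z j := by
    intro k; ext ω; simp [hT]
  have hTsm : ∀ k, StronglyMeasurable[G k] (T k) := by
    intro k
    rw [hTeq]
    refine Finset.stronglyMeasurable_sum _ fun j hj => ?_
    have hj' : j ≤ a + k := (Finset.mem_Icc.1 hj).2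
    exact (Filtration.stronglyAdapted_natural hsm j).mono (F.mono hj')
  have hTL2 : ∀ k, MemLp (T k) 2 μ := by
    intro k; rw [hTeq]; exact memLp_finset_sum' _ fun j _ => hL2 j
  have hTint : ∀ k, Integrable (T k) μ := fun k => (hTL2 k).integrable one_le_two
  have hcondY : ∀ k, μ[Z (a + k + 1)|G k] =ᵐ[μ] fun _ => 0 := by
    intro k
    have h := hindep.condExp_natural_ae_eq_of_lt hsm (Nat.lt_succ_self (a + k))
    simpa [hmean] using h
  have hTsucc : ∀ k, T (k + 1) = T k + Z (a + k + 1) := by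
    intro k; ext ω
    simp only [hT, Pi.add_apply]
    rw [show a + (k + 1) = (a + k) + 1 from rfl,
      Finset.sum_Icc_succ_top (by omega : a ≤ a + k + 1)]
  have hfint : ∀ k, Integrable (fun ω => T k ω ^ 2) μ := fun k => (hTL2 k).integrable_sq
  have hfsm : ∀ k, StronglyMeasurable[G k] (fun ω => T k ω ^ 2) := by
    intro k
    have := (hTsm k).mul (hTsm k)
    simpa [pow_two, Pi.mul_def] using this
  have hsub : Submartingale (fun k ω => T k ω ^ 2) G μ := by
    refine submartingale_nat hfsm hfint fun k => ?_
    have hYL2 : MemLp (Z (a + k + 1)) 2 μ := hL2 _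
    have hYint : Integrable (Z (a + k + 1)) μ := hYL2.integrable one_le_two
    have hintTY : Integrable (T k * Z (a + k + 1)) μ := by
      have h := ((hTL2 k).smul (p := 2) (q := 2) (r := 1) hYL2
        (hpqr := ⟨by simp [one_div, ENNReal.inv_two_add_inv_two]⟩))
      have h' := memLp_one_iff_integrable.mp h
      simpa [smul_eq_mul, mul_comm] using h'
    have hintYY : Integrable (Z (a + k + 1) * Z (a + k + 1)) μ := by
      have := hYL2.integrable_sq
      simpa [pow_two, Pi.mul_def] using this
    have hdecomp : (fun ω => T (k + 1) ω ^ 2)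
        = (fun ω => T k ω ^ 2)
          + ((2 : ℝ) • (T k * Z (a + k + 1)) + Z (a + k + 1) * Z (a + k + 1)) := by
      funext ω
      simp only [hTsucc k, Pi.add_apply, Pi.smul_apply, Pi.mul_apply, smul_eq_mul]
      ring
    have h1 : μ[fun ω => T (k + 1) ω ^ 2|G k]
        =ᵐ[μ] μ[fun ω => T k ω ^ 2|G k]
          + μ[(2 : ℝ) • (T k * Z (a + k + 1)) + Z (a + k + 1) * Z (a + k + 1)|G k] := by
      rw [hdecomp]
      exact condExp_add (hfint k) ((hintTY.smul (2 : ℝ)).add hintYY) _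
    have h2 : μ[(2 : ℝ) • (T k * Z (a + k + 1)) + Z (a + k + 1) * Z (a + k + 1)|G k]
        =ᵐ[μ] μ[(2 : ℝ) • (T k * Z (a + k + 1))|G k]
          + μ[Z (a + k + 1) * Z (a + k + 1)|G k] :=
      condExp_add (hintTY.smul (2 : ℝ)) hintYY _
    have h3 : μ[(2 : ℝ) • (T k * Z (a + k + 1))|G k]
        =ᵐ[μ] (2 : ℝ) • μ[T k * Z (a + k + 1)|G k] := condExp_smul (2 : ℝ) _ _
    have h4 : μ[T k * Z (a + k + 1)|G k] =ᵐ[μ] T k * μ[Z (a + k + 1)|G k] :=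
      condExp_mul_of_stronglyMeasurable_left (hTsm k) hintTY hYint
    have h5 : μ[Z (a + k + 1) * Z (a + k + 1)|G k]
        =ᵐ[μ] fun _ => ∫ ω, Z (a + k + 1) ω * Z (a + k + 1) ω ∂μ := by
      have hind : Indep (MeasurableSpace.comap (Z (a + k + 1)) inferInstance) (F (a + k)) μ :=
        hindep.indep_comap_natural_of_lt hsm (Nat.lt_succ_self (a + k))
      exact condExp_indep_eq (hmeas (a + k + 1)).comap_le (G.le k)
        ((comap_measurable (Z (a + k + 1))).mul (comap_measurable (Z (a + k + 1)))).stronglyMeasurable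
        hind
    have h6 : μ[fun ω => T k ω ^ 2|G k] = fun ω => T k ω ^ 2 :=
      condExp_of_stronglyMeasurable (G.le k) (hfsm k) (hfint k)
    have hYYnn : (0 : ℝ) ≤ ∫ ω, Z (a + k + 1) ω * Z (a + k + 1) ω ∂μ :=
      integral_nonneg fun ω => mul_self_nonneg _
    filter_upwards [h1, h2, h3, h4, h5, hcondY k] with ω e1 e2 e3 e4 e5 e6
    rw [e1, Pi.add_apply, h6, e2, Pi.add_apply, e3, Pi.smul_apply, e4, Pi.mul_apply, e6, e5]
    simp only [mul_zero, smul_eq_mul, add_zero, zero_add, smul_zero]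
    linarith
  -- expectation of (T K)^2 equals K+1
  have hmeanT : ∫ ω, T K ω ∂μ = 0 := by
    have : ∫ ω, T K ω ∂μ = ∑ j ∈ Finset.Icc a (a + K), ∫ ω, Z j ω ∂μ :=
      integral_finset_sum _ fun j _ => (hL2 j).integrable one_le_two
    simpa [hmean] using this
  have hvarT : variance (T K) μ = (K + 1 : ℝ) := by
    rw [hTeq, IndepFun.variance_sum (fun j _ => hL2 j)
      (fun i _ j _ hij => hindep.indepFun hij)]
    have hv : ∀ j, variance (Z j) μ = 1 := by
      intro j
      rw [variance_eq_sub (hL2 j), hmean j]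
      simp only [Pi.pow_apply]
      rw [hvar j]
      norm_num
    simp only [hv, Finset.sum_const, Nat.card_Icc, smul_eq_mul, mul_one]
    have : a + K + 1 - a = K + 1 := by omega
    rw [this]
    push_cast
    ring
  have hintT2 : ∫ ω, T K ω ^ 2 ∂μ = (K + 1 : ℝ) := by
    have := variance_eq_sub (hTL2 K)
    simp only [Pi.pow_apply] at this
    rw [hmeanT] at this
    rw [← hvarT, this]
    ring
  have hnonneg : (0 : ℕ → Ω → ℝ) ≤ fun k ω => T k ω ^ 2 := fun k ω => sq_nonneg _
  have hmax := maximal_ineq hsub hnonneg (ε := ⟨c ^ 2, sq_nonneg c⟩) K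
  set A := {ω | ((⟨c ^ 2, sq_nonneg c⟩ : NNReal) : ℝ)
    ≤ (Finset.range (K + 1)).sup' Finset.nonempty_range_add_one fun k => T k ω ^ 2} with hA
  have hset : {ω | ∃ k, k ≤ K ∧ c ≤ |∑ j ∈ Finset.Icc a (a + k), Z j ω|} = A := by
    ext ω
    simp only [hA, Set.mem_setOf_eq, Finset.le_sup'_iff, Finset.mem_range, Nat.lt_succ_iff,
      NNReal.coe_mk]
    constructor
    · rintro ⟨k, hk, hck⟩
      refine ⟨k, hk, ?_⟩
      calc c ^ 2 ≤ |T k ω| ^ 2 := pow_le_pow_left₀ hc.le hck 2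
        _ = T k ω ^ 2 := sq_abs _
    · rintro ⟨k, hk, hck⟩
      refine ⟨k, hk, ?_⟩
      by_contra h
      push_neg at h
      have := pow_lt_pow_left₀ h (abs_nonneg _) two_ne_zero
      rw [sq_abs] at this
      exact absurd hck (not_le.2 this)
  rw [hset]
  have hub : ENNReal.ofReal (∫ ω in A, T K ω ^ 2 ∂μ) ≤ ENNReal.ofReal ((K : ℝ) + 1) := by
    refine ENNReal.ofReal_le_ofReal ?_
    refine le_trans (setIntegral_le_integral (hfint K)
      (Filter.Eventually.of_forall fun ω => sq_nonneg _)) ?_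
    rw [hintT2]
  have h := le_trans hmax hub
  have hcoe : ENNReal.ofNNReal ⟨c ^ 2, sq_nonneg c⟩ = ENNReal.ofReal (c ^ 2) :=
    (ENNReal.ofReal_eq_coe_nnreal (sq_nonneg c)).symm
  rw [ENNReal.ofReal_div_of_pos (by positivity : (0:ℝ) < c ^ 2)]
  rw [ENNReal.le_div_iff_mul_le (Or.inl (by simp [ENNReal.ofReal_eq_zero]; positivity))
    (Or.inl ENNReal.ofReal_ne_top)]
  rw [mul_comm, ← hcoe]
  exact h

theorem stmt4 {Ω : Type*} [MeasurableSpace Ω] (μ : Measure Ω) [IsProbabilityMeasure μ]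
    (Z : ℕ → Ω → ℝ) (hmeas : ∀ j, Measurable (Z j))
    (hindep : iIndepFun Z μ)
    (hident : ∀ j, IdentDistrib (Z j) (Z 0) μ μ)
    (hL2 : MemLp (Z 0) 2 μ)
    (hmean : ∫ ω, Z 0 ω ∂μ = 0)
    (hvar : ∫ ω, (Z 0 ω) ^ 2 ∂μ = 1)
    (N : ℕ → Ω → ℕ) (hNmeas : ∀ n, Measurable (N n))
    (x : ℕ → ℝ) (hx0 : ∀ n, 0 ≤ x n)
    (hxn : Tendsto (fun n => x n / n) atTop (nhds 0))
    (hN : Tendsto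
      (fun n => μ {ω | x n ≤ |(N n ω : ℝ) - ∫ ω', (N n ω' : ℝ) ∂μ|})
      atTop (nhds 0)) :
    TendstoInMeasure μ
      (fun (n : ℕ) ω => (1 / Real.sqrt (n : ℝ)) *
        ∑ j ∈ Finset.Icc (min (N n ω) ⌈∫ ω', (N n ω' : ℝ) ∂μ⌉₊)
                          (max (N n ω) ⌊∫ ω', (N n ω' : ℝ) ∂μ⌋₊), Z j ω)
      atTop (fun _ => 0) := by
  -- preliminary facts about the Z's
  have hL2' : ∀ j, MemLp (Z j) 2 μ := fun j => (hident j).symm.memLp_snd hL2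
  have hmean' : ∀ j, ∫ ω, Z j ω ∂μ = 0 := fun j => ((hident j).integral_eq).trans hmean
  have hvar' : ∀ j, ∫ ω, (Z j ω) ^ 2 ∂μ = 1 := by
    intro j
    have h := ((hident j).comp (measurable_id.pow_const 2)).integral_eq
    simpa [Function.comp] using h.trans hvar
  rw [tendstoInMeasure_iff_dist]
  intro ε hε
  refine tendsto_of_tendsto_of_tendsto_of_le_of_le' (g := fun _ => (0 : ℝ≥0∞))
    (h := fun n => μ {ω | x n ≤ |(N n ω : ℝ) - ∫ ω', (N n ω' : ℝ) ∂μ|}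
      + ENNReal.ofReal ((8 * x n + 16) / (ε ^ 2 * n)))
    tendsto_const_nhds ?_ (Eventually.of_forall fun n => zero_le) ?_
  · -- the upper bound tends to 0
    rw [show (0 : ℝ≥0∞) = 0 + 0 by simp]
    refine Tendsto.add hN ?_
    rw [show (0 : ℝ≥0∞) = ENNReal.ofReal 0 by simp]
    refine ENNReal.tendsto_ofReal ?_
    have h1 : Tendsto (fun n : ℕ => (8 / ε ^ 2) * (x n / n) + (16 / ε ^ 2) * (1 / n))
        atTop (𝓝 0) := by
      have := (hxn.const_mul (8 / ε ^ 2)).add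
        (tendsto_one_div_atTop_nhds_zero_nat.const_mul (16 / ε ^ 2))
      simpa using this
    refine Tendsto.congr' ?_ h1
    filter_upwards [eventually_ge_atTop 1] with n hn
    have hn0 : (0 : ℝ) < n := by exact_mod_cast hn
    have hε0 : (ε : ℝ) ≠ 0 := ne_of_gt hε
    field_simp
  · -- the eventual bound
    filter_upwards [eventually_ge_atTop 1] with n hn
    set mn := ∫ ω', (N n ω' : ℝ) ∂μ with hmn
    have hmn0 : (0 : ℝ) ≤ mn := integral_nonneg fun ω => Nat.cast_nonneg _
    set an := ⌊mn⌋₊ - ⌈x n⌉₊ with han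
    set bn := ⌈mn⌉₊ + ⌈x n⌉₊ with hbn
    have hfc : ⌊mn⌋₊ ≤ ⌈mn⌉₊ := Nat.floor_le_ceil mn
    have hab : an ≤ bn := by omega
    set Kn := bn - an with hKn
    set cn := ε * Real.sqrt n / 2 with hcn
    have hsn : (0 : ℝ) < Real.sqrt n := Real.sqrt_pos.2 (by exact_mod_cast hn)
    have hcn0 : (0 : ℝ) < cn := by rw [hcn]; positivity
    have hsub : {ω | ε ≤ dist ((1 / Real.sqrt (n : ℝ)) *
          ∑ j ∈ Finset.Icc (min (N n ω) ⌈mn⌉₊) (max (N n ω) ⌊mn⌋₊), Z j ω) 0}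
        ⊆ {ω | x n ≤ |(N n ω : ℝ) - mn|}
          ∪ {ω | ∃ k, k ≤ Kn ∧ cn ≤ |∑ j ∈ Finset.Icc an (an + k), Z j ω|} := by
      intro ω hω
      simp only [Set.mem_setOf_eq, Real.dist_eq, sub_zero] at hω
      by_cases hB : x n ≤ |(N n ω : ℝ) - mn|
      · exact Or.inl hB
      right
      push_neg at hB
      have hNlt : (N n ω : ℝ) < mn + x n := by
        have := abs_lt.1 hB; linarith [this.2]
      have hNgt : mn - x n < (N n ω : ℝ) := by
        have := abs_lt.1 hB; linarith [this.1]
      -- ℕ inequalities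
      have haN : an ≤ N n ω := by
        have h1 : (⌊mn⌋₊ : ℝ) ≤ mn := Nat.floor_le hmn0
        have h2 : x n ≤ (⌈x n⌉₊ : ℝ) := Nat.le_ceil _
        have h3 : (⌊mn⌋₊ : ℝ) < (N n ω : ℝ) + (⌈x n⌉₊ : ℝ) := by linarith
        have h4 : ⌊mn⌋₊ < N n ω + ⌈x n⌉₊ := by exact_mod_cast h3
        omega
      have haC : an ≤ ⌈mn⌉₊ := by omega
      have hNb : N n ω ≤ bn := by
        have h1 : mn ≤ (⌈mn⌉₊ : ℝ) := Nat.le_ceil _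
        have h2 : x n ≤ (⌈x n⌉₊ : ℝ) := Nat.le_ceil _
        have h3 : (N n ω : ℝ) < (bn : ℝ) := by
          rw [hbn]; push_cast; linarith
        have h4 : N n ω < bn := by exact_mod_cast h3
        omega
      have hCb : ⌊mn⌋₊ ≤ bn := by omega
      have hlo : an ≤ min (N n ω) ⌈mn⌉₊ := le_min haN haC
      have hhi : max (N n ω) ⌊mn⌋₊ ≤ bn := max_le hNb hCb
      have hlohi : min (N n ω) ⌈mn⌉₊ ≤ max (N n ω) ⌊mn⌋₊ :=
        le_trans (min_le_left _ _) (le_max_left _ _)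
      -- split the sum
      have hicc : Finset.Icc (min (N n ω) ⌈mn⌉₊) (max (N n ω) ⌊mn⌋₊)
          = Finset.Ico (min (N n ω) ⌈mn⌉₊) (max (N n ω) ⌊mn⌋₊ + 1) := by
        rw [Finset.Ico_add_one_right_eq_Icc]
      have hsplit : (∑ j ∈ Finset.Ico an (min (N n ω) ⌈mn⌉₊), Z j ω)
            + (∑ j ∈ Finset.Ico (min (N n ω) ⌈mn⌉₊) (max (N n ω) ⌊mn⌋₊ + 1), Z j ω)
          = ∑ j ∈ Finset.Ico an (max (N n ω) ⌊mn⌋₊ + 1), Z j ω :=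
        Finset.sum_Ico_consecutive _ hlo (by omega)
      have hS : ε * Real.sqrt n ≤
          |∑ j ∈ Finset.Icc (min (N n ω) ⌈mn⌉₊) (max (N n ω) ⌊mn⌋₊), Z j ω| := by
        rw [abs_mul, abs_of_pos (by positivity : (0:ℝ) < 1 / Real.sqrt n)] at hω
        have := mul_le_mul_of_nonneg_right hω hsn.le
        calc ε * Real.sqrt n ≤ (1 / Real.sqrt n *
            |∑ j ∈ Finset.Icc (min (N n ω) ⌈mn⌉₊) (max (N n ω) ⌊mn⌋₊), Z j ω|) * Real.sqrt n :=
              this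
          _ = |∑ j ∈ Finset.Icc (min (N n ω) ⌈mn⌉₊) (max (N n ω) ⌊mn⌋₊), Z j ω| := by
              field_simp
      -- the key disjunction
      have hkey : cn ≤ |∑ j ∈ Finset.Ico an (max (N n ω) ⌊mn⌋₊ + 1), Z j ω|
          ∨ cn ≤ |∑ j ∈ Finset.Ico an (min (N n ω) ⌈mn⌉₊), Z j ω| := by
        by_contra h
        push_neg at h
        obtain ⟨h1, h2⟩ := h
        have hPS : |∑ j ∈ Finset.Icc (min (N n ω) ⌈mn⌉₊) (max (N n ω) ⌊mn⌋₊), Z j ω|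
            ≤ |∑ j ∈ Finset.Ico an (max (N n ω) ⌊mn⌋₊ + 1), Z j ω|
              + |∑ j ∈ Finset.Ico an (min (N n ω) ⌈mn⌉₊), Z j ω| := by
          rw [hicc]
          have h3 : ∑ j ∈ Finset.Ico (min (N n ω) ⌈mn⌉₊) (max (N n ω) ⌊mn⌋₊ + 1), Z j ω
              = (∑ j ∈ Finset.Ico an (max (N n ω) ⌊mn⌋₊ + 1), Z j ω)
                - (∑ j ∈ Finset.Ico an (min (N n ω) ⌈mn⌉₊), Z j ω) := by
            linarith [hsplit]
          rw [h3]
          exact abs_sub _ _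
        have h4 : ε * Real.sqrt n = 2 * cn := by rw [hcn]; ring
        rw [hcn] at h1 h2
        linarith
      have hgen : ∀ c : ℕ, an ≤ c → c ≤ bn + 1 →
          cn ≤ |∑ j ∈ Finset.Ico an c, Z j ω| →
          ∃ k, k ≤ Kn ∧ cn ≤ |∑ j ∈ Finset.Icc an (an + k), Z j ω| := by
        intro c hac hcb hcP
        rcases Nat.eq_or_lt_of_le hac with heq | hlt
        · rw [← heq, Finset.Ico_self, Finset.sum_empty, abs_zero] at hcP
          exact absurd hcP (not_le.2 hcn0)
        refine ⟨c - an - 1, by omega, ?_⟩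
        have hIc : Finset.Icc an (an + (c - an - 1)) = Finset.Ico an c := by
          rw [← Finset.Ico_add_one_right_eq_Icc]
          congr 1
          omega
        rw [hIc]
        exact hcP
      rcases hkey with h | h
      · exact hgen _ (le_trans hlo (by omega)) (by omega) h
      · exact hgen _ hlo (by omega) h
    refine le_trans (measure_mono hsub) (le_trans (measure_union_le _ _) ?_)
    refine add_le_add_right ?_ _
    refine le_trans (kolmogorov_aux μ Z hmeas hindep hL2' hmean' hvar' an Kn hcn0) ?_
    refine ENNReal.ofReal_le_ofReal ?_
    -- real arithmetic
    have hn0 : (0 : ℝ) < n := by exact_mod_cast hn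
    have hcn2 : cn ^ 2 = ε ^ 2 * n / 4 := by
      rw [hcn, div_pow, mul_pow, Real.sq_sqrt (Nat.cast_nonneg n)]
      norm_num
    have hK1 : Kn ≤ 2 * ⌈x n⌉₊ + 1 := by
      have := Nat.ceil_le_floor_add_one mn
      omega
    have hK2 : (⌈x n⌉₊ : ℝ) ≤ x n + 1 := (Nat.ceil_lt_add_one (hx0 n)).le
    have hK : (Kn : ℝ) + 1 ≤ 2 * x n + 4 := by
      have h1 : (Kn : ℝ) ≤ 2 * (⌈x n⌉₊ : ℝ) + 1 := by exact_mod_cast hK1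
      linarith
    calc ((Kn : ℝ) + 1) / cn ^ 2 = ((Kn : ℝ) + 1) * 4 / (ε ^ 2 * n) := by
          rw [hcn2, div_div_eq_mul_div]
      _ ≤ (8 * x n + 16) / (ε ^ 2 * n) := by
          gcongr
          linarith
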